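/- Let A be a symmetric positive definite real 3×3 matrix and u ∈ ℝ³ a unit vector. Then for all R ∈ SO(3), θ ∈ ℝ, ω ∈ ℝ³ and v ∈ ℝ: ‖D_R(R,θ)·ω + D_θ(R,θ)·v‖ ≤ ‖Ā‖_F·‖ω‖ + (‖Ā‖_F + 2λ_M^Ā)·|v|. -/

import Mathlib

open Matrix

noncomputable section

abbrev M3 : Type := Matrix (Fin 3) (Fin 3) ℝ
abbrev V3 : Type := Fin 3 → ℝ

/-- skew-symmetric matrix associated to `x`: `skew x *ᵥ y = x ×₃ y`. -/
def skew (x : V3) : M3 :=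
  !![0, -x 2, x 1; x 2, 0, -x 0; -x 1, x 0, 0]

/-- the special orthogonal group SO(3) as a subset of 3×3 matrices -/
def SO3 : Set M3 := {R | Rᵀ * R = 1 ∧ R.det = 1}

/-- Rodrigues formula -/
def Ra (θ : ℝ) (u : V3) : M3 :=
  1 + Real.sin θ • skew u + (1 - Real.cos θ) • (skew u * skew u)

/-- `psi M = vec (P_a M)`, the vector part of the antisymmetric projection -/
def psi (M : M3) : V3 :=
  ![(M 2 1 - M 1 2) / 2, (M 0 2 - M 2 0) / 2, (M 1 0 - M 0 1) / 2]

/-- the angular-warping transformation `T(R,θ) = R · Ra(θ,u)` -/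
def Tmap (u : V3) (R : M3) (θ : ℝ) : M3 := R * Ra θ u

/-- the potential function `U(R,θ)` on SO(3) × ℝ -/
def Ufun (A : M3) (u : V3) (γ : ℝ) (R : M3) (θ : ℝ) : ℝ :=
  (A * (1 - Tmap u R θ)).trace + γ / 2 * θ ^ 2

/-- Euclidean norm on ℝ³ -/
def enorm3 (x : V3) : ℝ := Real.sqrt (x ⬝ᵥ x)

/-- Frobenius norm of a 3×3 matrix -/
def fnorm (M : M3) : ℝ := Real.sqrt ((Mᵀ * M).trace)

/-- `E(M) := (tr(M) I − Mᵀ)/2` -/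
def Emap (M : M3) : M3 := (2⁻¹ : ℝ) • (M.trace • (1 : M3) - Mᵀ)

/-- `D_R(R,θ)` from Lemma 2 -/
def DR (A : M3) (u : V3) (R : M3) (θ : ℝ) : M3 :=
  Ra θ u * Emap (A * Tmap u R θ) * (Ra θ u)ᵀ

/-- `D_θ(R,θ)` from Lemma 2 -/
def Dθ (A : M3) (u : V3) (R : M3) (θ : ℝ) : V3 :=
  (Ra θ u * Emap (A * Tmap u R θ)) *ᵥ u - skew (Ra θ u *ᵥ psi (A * Tmap u R θ)) *ᵥ u

/-- Δ(v,u) from the construction of the synergistic gap -/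
def Delta (A : M3) (v u : V3) : ℝ :=
  u ⬝ᵥ ((A.trace • (1 : M3) - A - (2 * (v ⬝ᵥ A *ᵥ v)) • ((1 : M3) - vecMulVec v v)) *ᵥ u)

/-- `v` is a unit eigenvector of `A` -/
def IsUnitEigen (A : M3) (v : V3) : Prop :=
  v ⬝ᵥ v = 1 ∧ ∃ lam : ℝ, A *ᵥ v = lam • v

/-- Ā := (tr(A) I − A)/2 -/
def Abar (A : M3) : M3 := (2⁻¹ : ℝ) • (A.trace • (1 : M3) - A)

/-- `lam` is an eigenvalue of `M` -/
def IsEigen (M : M3) (lam : ℝ) : Prop := ∃ w : V3, w ≠ 0 ∧ M *ᵥ w = lam • w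


/-! ### Auxiliary lemmas -/

lemma dot_self_nonneg (x : V3) : 0 ≤ x ⬝ᵥ x :=
  Finset.sum_nonneg fun _ _ => mul_self_nonneg _

lemma orth_mulVec (T : M3) (hT : Tᵀ * T = 1) (x : V3) :
    (T *ᵥ x) ⬝ᵥ (T *ᵥ x) = x ⬝ᵥ x := by
  rw [dotProduct_mulVec, ← mulVec_transpose, mulVec_mulVec, hT, one_mulVec]

lemma enorm3_orth (T : M3) (hT : Tᵀ * T = 1) (x : V3) :
    enorm3 (T *ᵥ x) = enorm3 x := by rw [enorm3, orth_mulVec T hT, enorm3]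

lemma enorm3_nonneg (x : V3) : 0 ≤ enorm3 x := Real.sqrt_nonneg _

lemma enorm3_sq (x : V3) : enorm3 x ^ 2 = x ⬝ᵥ x := Real.sq_sqrt (dot_self_nonneg x)

lemma cs3 (x y : V3) : (x ⬝ᵥ y)^2 ≤ (x ⬝ᵥ x) * (y ⬝ᵥ y) := by
  simp only [dotProduct, Fin.sum_univ_three]
  nlinarith [sq_nonneg (x 0 * y 1 - x 1 * y 0), sq_nonneg (x 0 * y 2 - x 2 * y 0),
    sq_nonneg (x 1 * y 2 - x 2 * y 1)]

lemma cs3' (x y : V3) : x ⬝ᵥ y ≤ enorm3 x * enorm3 y := by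
  have h : |x ⬝ᵥ y| ≤ enorm3 x * enorm3 y := by
    rw [← Real.sqrt_sq_eq_abs, enorm3, enorm3, ← Real.sqrt_mul (dot_self_nonneg x)]
    exact Real.sqrt_le_sqrt (cs3 x y)
  exact (abs_le.mp h).2

lemma cs3'' (x y : V3) : -(enorm3 x * enorm3 y) ≤ x ⬝ᵥ y := by
  have h : |x ⬝ᵥ y| ≤ enorm3 x * enorm3 y := by
    rw [← Real.sqrt_sq_eq_abs, enorm3, enorm3, ← Real.sqrt_mul (dot_self_nonneg x)]
    exact Real.sqrt_le_sqrt (cs3 x y)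
  linarith [(abs_le.mp h).1]

lemma enorm3_add (x y : V3) : enorm3 (x + y) ≤ enorm3 x + enorm3 y := by
  have h1 : (x + y) ⬝ᵥ (x + y) ≤ (enorm3 x + enorm3 y)^2 := by
    have e1 := enorm3_sq x
    have e2 := enorm3_sq y
    have := cs3' x y
    have hd : (x + y) ⬝ᵥ (x + y) = x ⬝ᵥ x + 2 * (x ⬝ᵥ y) + y ⬝ᵥ y := by
      simp only [dotProduct, Fin.sum_univ_three, Pi.add_apply]; ring
    nlinarith
  calc enorm3 (x + y) = Real.sqrt ((x+y) ⬝ᵥ (x+y)) := rfl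
    _ ≤ Real.sqrt ((enorm3 x + enorm3 y)^2) := Real.sqrt_le_sqrt h1
    _ = enorm3 x + enorm3 y := by
        rw [Real.sqrt_sq (add_nonneg (enorm3_nonneg x) (enorm3_nonneg y))]

lemma enorm3_smul (v : ℝ) (x : V3) : enorm3 (v • x) = |v| * enorm3 x := by
  have hd : (v • x) ⬝ᵥ (v • x) = v^2 * (x ⬝ᵥ x) := by
    simp only [dotProduct, Fin.sum_univ_three, Pi.smul_apply, smul_eq_mul]; ring
  rw [enorm3, hd, enorm3, Real.sqrt_mul (sq_nonneg v), Real.sqrt_sq_eq_abs]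

lemma enorm3_sub (x y : V3) : enorm3 (x - y) ≤ enorm3 x + enorm3 y := by
  have := enorm3_add x (-y)
  have hn : enorm3 (-y) = enorm3 y := by
    have := enorm3_smul (-1) y
    simpa using this
  simpa [sub_eq_add_neg, hn] using this

lemma trace_transpose_mul_nonneg (M : M3) : 0 ≤ (Mᵀ * M).trace := by
  refine Finset.sum_nonneg fun i _ => ?_
  simp only [mul_apply, transpose_apply, diag_apply]
  exact Finset.sum_nonneg fun j _ => mul_self_nonneg _

lemma mulVec_enorm3_le (M : M3) (x : V3) : enorm3 (M *ᵥ x) ≤ fnorm M * enorm3 x := by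
  have key : (M *ᵥ x) ⬝ᵥ (M *ᵥ x) ≤ (Mᵀ * M).trace * (x ⬝ᵥ x) := by
    have h0 := cs3 (M 0) x
    have h1 := cs3 (M 1) x
    have h2 := cs3 (M 2) x
    have e : (M *ᵥ x) ⬝ᵥ (M *ᵥ x) = (M 0 ⬝ᵥ x)^2 + (M 1 ⬝ᵥ x)^2 + (M 2 ⬝ᵥ x)^2 := by
      simp only [dotProduct, mulVec, Fin.sum_univ_three]; ring
    have e2 : (Mᵀ * M).trace = M 0 ⬝ᵥ M 0 + M 1 ⬝ᵥ M 1 + M 2 ⬝ᵥ M 2 := by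
      simp only [trace, diag_apply, mul_apply, transpose_apply, dotProduct,
        Fin.sum_univ_three]; ring
    rw [e, e2]; nlinarith [dot_self_nonneg x]
  calc enorm3 (M *ᵥ x) = Real.sqrt ((M *ᵥ x) ⬝ᵥ (M *ᵥ x)) := rfl
    _ ≤ Real.sqrt ((Mᵀ * M).trace * (x ⬝ᵥ x)) := Real.sqrt_le_sqrt key
    _ = fnorm M * enorm3 x := by
        rw [Real.sqrt_mul (trace_transpose_mul_nonneg M)]; rfl

lemma herm_of_symm {M : M3} (h : Mᵀ = M) : M.IsHermitian := by
  rw [Matrix.IsHermitian, conjTranspose_eq_transpose_of_trivial, h]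

lemma psd_of {M : M3} (h : Mᵀ = M) (h2 : ∀ x : V3, 0 ≤ x ⬝ᵥ (M *ᵥ x)) : M.PosSemidef := by
  refine PosSemidef.of_dotProduct_mulVec_nonneg (herm_of_symm h) fun x => ?_
  simpa using h2 x

lemma skew_transpose (x : V3) : (skew x)ᵀ = - skew x := by
  ext i j; fin_cases i <;> fin_cases j <;> simp [skew]

lemma skew_mul_skew (u : V3) : skew u * skew u = vecMulVec u u - (u ⬝ᵥ u) • 1 := by
  ext i j; fin_cases i <;> fin_cases j <;>
    simp [skew, mul_apply, Fin.sum_univ_three, vecMulVec, dotProduct, one_apply] <;> ring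

lemma skew_mul_vmv (u : V3) : skew u * vecMulVec u u = 0 := by
  ext i j; fin_cases i <;> fin_cases j <;>
    simp [skew, mul_apply, Fin.sum_univ_three, vecMulVec] <;> ring

lemma vmv_mul_skew (u : V3) : vecMulVec u u * skew u = 0 := by
  ext i j; fin_cases i <;> fin_cases j <;>
    simp [skew, mul_apply, Fin.sum_univ_three, vecMulVec] <;> ring

lemma Ra_orth (θ : ℝ) (u : V3) (hu : u ⬝ᵥ u = 1) : (Ra θ u)ᵀ * Ra θ u = 1 := by
  have hK2 : skew u * skew u = vecMulVec u u - (1:ℝ) • 1 := by rw [skew_mul_skew, hu]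
  have hK3 : skew u * (skew u * skew u) = - skew u := by
    rw [hK2, mul_sub, skew_mul_vmv, mul_smul_comm, mul_one, one_smul, zero_sub]
  have hK3' : (skew u * skew u) * skew u = - skew u := by
    rw [hK2, sub_mul, vmv_mul_skew, smul_mul_assoc, one_mul, one_smul, zero_sub]
  have hK4 : (skew u * skew u) * (skew u * skew u) = - (skew u * skew u) := by
    rw [← mul_assoc, hK3', neg_mul]
  have hT : (Ra θ u)ᵀ = 1 - Real.sin θ • skew u + (1 - Real.cos θ) • (skew u * skew u) := by
    simp [Ra, transpose_add, transpose_smul, transpose_mul, skew_transpose, smul_neg]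
    abel
  rw [hT, Ra]
  set s := Real.sin θ
  set c := Real.cos θ
  set K := skew u
  have hsc : s^2 = 1 - c^2 := by
    have := Real.sin_sq_add_cos_sq θ; nlinarith
  have expand : (1 - s • K + (1 - c) • (K * K)) * (1 + s • K + (1 - c) • (K * K))
      = 1 + (2*(1-c) - s^2 - (1-c)^2) • (K * K) := by
    simp only [add_mul, sub_mul, mul_add, one_mul, mul_one, smul_mul_assoc, mul_smul_comm,
      smul_smul, hK3, hK3', hK4]
    module
  rw [expand]
  have : (2*(1-c) - s^2 - (1-c)^2) = 0 := by rw [hsc]; ring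
  rw [this, zero_smul, add_zero]

lemma trace_one3 : (1 : M3).trace = 3 := by simp [trace_one]

lemma trace_Emap_sq (M : M3) :
    ((Emap M)ᵀ * Emap M).trace = (M.trace^2 + (M * Mᵀ).trace)/4 := by
  have : (Emap M)ᵀ * Emap M
      = (4⁻¹ : ℝ) • (M.trace^2 • (1:M3) - M.trace • Mᵀ - M.trace • M + M * Mᵀ) := by
    simp only [Emap, transpose_smul, transpose_sub, transpose_smul, transpose_one,
      transpose_transpose]
    rw [smul_mul_smul_comm]
    congr 1
    · norm_num
    · rw [sub_mul, mul_sub, mul_sub, smul_mul_assoc, smul_mul_assoc, one_mul, mul_smul_comm]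
      rw [smul_smul, ← pow_two]
      simp only [one_mul, mul_one]
      abel
  rw [this]
  simp only [trace_smul, trace_add, trace_sub, trace_smul, trace_one3, trace_transpose,
    smul_eq_mul]
  ring

lemma psd_trace_mul_nonneg {P G : M3} (hP : P.PosSemidef) (hG : G.PosSemidef) :
    0 ≤ (P * G).trace := by
  open scoped MatrixOrder Matrix.Norms.L2Operator in obtain ⟨B, rfl⟩ := CStarAlgebra.nonneg_iff_eq_star_mul_self.mp hG.nonneg
  rw [← mul_assoc, trace_mul_cycle]
  have h := hP.mul_mul_conjTranspose_same B
  refine Finset.sum_nonneg fun i _ => ?_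
  simpa [dotProduct, mulVec, Pi.single_apply, Finset.sum_ite_eq, star_eq_conjTranspose] using h.dotProduct_mulVec_nonneg (Pi.single i 1)

lemma dot_mulVec_transpose (T : M3) (x : V3) : x ⬝ᵥ (Tᵀ *ᵥ x) = x ⬝ᵥ (T *ᵥ x) := by
  rw [mulVec_transpose, dotProduct_comm, ← dotProduct_mulVec]

lemma dot_mulVec_le_self (T : M3) (hT : Tᵀ * T = 1) (x : V3) :
    x ⬝ᵥ (T *ᵥ x) ≤ x ⬝ᵥ x := by
  calc x ⬝ᵥ (T *ᵥ x) ≤ enorm3 x * enorm3 (T *ᵥ x) := cs3' _ _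
    _ = enorm3 x ^ 2 := by rw [enorm3_orth T hT, pow_two]
    _ = x ⬝ᵥ x := enorm3_sq x

lemma one_sub_sym_psd (T : M3) (hT : Tᵀ * T = 1) :
    (1 - (2⁻¹ : ℝ) • (T + Tᵀ)).PosSemidef := by
  refine psd_of ?_ fun x => ?_
  · simp only [transpose_sub, transpose_one, transpose_smul, transpose_add,
      transpose_transpose]
    rw [add_comm Tᵀ T]
  · have hmv : (1 - (2⁻¹ : ℝ) • (T + Tᵀ)) *ᵥ x = x - (2⁻¹ : ℝ) • (T *ᵥ x + Tᵀ *ᵥ x) := by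
      rw [sub_mulVec, one_mulVec, smul_mulVec, add_mulVec]
    rw [hmv, dotProduct_sub, dotProduct_smul, dotProduct_add, dot_mulVec_transpose]
    have := dot_mulVec_le_self T hT x
    simp only [smul_eq_mul]
    linarith

lemma trace_mul_le {A : M3} (T : M3) (hA : A.PosSemidef) (hAs : Aᵀ = A) (hT : Tᵀ * T = 1) :
    (A * T).trace ≤ A.trace := by
  have h := psd_trace_mul_nonneg hA (one_sub_sym_psd T hT)
  have hexp : (A * (1 - (2⁻¹ : ℝ) • (T + Tᵀ))).trace
      = A.trace - (2⁻¹:ℝ) * ((A * T).trace + (A * Tᵀ).trace) := by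
    rw [mul_sub, mul_one, mul_smul_comm, mul_add, trace_sub, trace_smul, trace_add]
    simp [smul_eq_mul]
  have hAT : (A * Tᵀ).trace = (A * T).trace := by
    rw [← trace_transpose, transpose_mul, transpose_transpose, hAs, trace_mul_comm]
  rw [hexp, hAT] at h
  linarith

lemma trace_mul_sq_le {A : M3} (T : M3) (hA : A.PosSemidef) (hAs : Aᵀ = A) (hT : Tᵀ * T = 1) :
    (A * T).trace ^ 2 ≤ A.trace ^ 2 := by
  have h1 := trace_mul_le T hA hAs hT
  have hT' : (-T)ᵀ * (-T) = 1 := by rw [transpose_neg, neg_mul_neg, hT]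
  have h2 := trace_mul_le (-T) hA hAs hT'
  rw [mul_neg, trace_neg] at h2
  nlinarith

lemma Abar_eq_Emap {A : M3} (hAs : Aᵀ = A) : Abar A = Emap A := by rw [Abar, Emap, hAs]

lemma fnorm_Emap_le {A : M3} (T : M3) (hA : A.PosSemidef) (hAs : Aᵀ = A) (hT : Tᵀ * T = 1) :
    fnorm (Emap (A * T)) ≤ fnorm (Abar A) := by
  have hTT : T * Tᵀ = 1 := mul_eq_one_comm.mp hT
  have hMMt : (A * T) * (A * T)ᵀ = A * Aᵀ := by
    rw [transpose_mul, mul_assoc, ← mul_assoc T, hTT, one_mul]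
  rw [fnorm, fnorm, Abar_eq_Emap hAs, trace_Emap_sq, trace_Emap_sq, hMMt]
  apply Real.sqrt_le_sqrt
  have := trace_mul_sq_le T hA hAs hT
  linarith

lemma psi_dot (M : M3) (e : V3) : psi M ⬝ᵥ e = -(2⁻¹ : ℝ) * (M * skew e).trace := by
  simp only [psi, skew, dotProduct, Fin.sum_univ_three, trace, diag_apply, mul_apply,
    Matrix.cons_val_zero, Matrix.cons_val_one, Matrix.cons_val_two, Matrix.tail_cons,
    Matrix.head_cons, Matrix.cons_val', Matrix.empty_val',
    Matrix.cons_val_fin_one, Matrix.head_fin_const, Matrix.of_apply]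
  ring

lemma skew_mulVec_enorm_le (x y : V3) : enorm3 (skew x *ᵥ y) ≤ enorm3 x * enorm3 y := by
  have key : (skew x *ᵥ y) ⬝ᵥ (skew x *ᵥ y) ≤ (x ⬝ᵥ x) * (y ⬝ᵥ y) := by
    have h : (skew x *ᵥ y) ⬝ᵥ (skew x *ᵥ y) + (x ⬝ᵥ y)^2 = (x ⬝ᵥ x) * (y ⬝ᵥ y) := by
      simp only [dotProduct, mulVec, skew, Fin.sum_univ_three, Matrix.cons_val_zero,
        Matrix.cons_val_one, Matrix.cons_val_two, Matrix.tail_cons, Matrix.head_cons,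
        Matrix.cons_val', Matrix.empty_val', Matrix.cons_val_fin_one,
        Matrix.head_fin_const, Matrix.of_apply]
      ring
    nlinarith [sq_nonneg (x ⬝ᵥ y)]
  calc enorm3 (skew x *ᵥ y) = Real.sqrt ((skew x *ᵥ y) ⬝ᵥ (skew x *ᵥ y)) := rfl
    _ ≤ Real.sqrt ((x ⬝ᵥ x) * (y ⬝ᵥ y)) := Real.sqrt_le_sqrt key
    _ = enorm3 x * enorm3 y := by rw [Real.sqrt_mul (dot_self_nonneg x)]; rfl

lemma shift_psd {B : M3} (hB : B.IsHermitian) (lamM : ℝ)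
    (hbound : ∀ lam : ℝ, IsEigen B lam → lam ≤ lamM) :
    (lamM • (1 : M3) - B).PosSemidef := by
  have hC : (lamM • (1 : M3) - B).IsHermitian := by
    refine IsHermitian.sub ?_ hB
    rw [Matrix.IsHermitian, conjTranspose_smul, conjTranspose_one, star_trivial]
  refine hC.posSemidef_iff_eigenvalues_nonneg.mpr fun i => (?_ : (0:ℝ) ≤ _)
  set w : V3 := ⇑(hC.eigenvectorBasis i) with hw
  have hwne : w ≠ 0 := by
    intro h0
    have : (hC.eigenvectorBasis i : EuclideanSpace ℝ (Fin 3)) = 0 := by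
      apply_fun (WithLp.equiv 2 (Fin 3 → ℝ))
      simpa [hw] using h0
    exact hC.eigenvectorBasis.toBasis.ne_zero i (by simpa using this)
  have hmv := hC.mulVec_eigenvectorBasis i
  have hB_eig : B *ᵥ w = (lamM - hC.eigenvalues i) • w := by
    have hexp : (lamM • (1 : M3) - B) *ᵥ w = lamM • w - B *ᵥ w := by
      rw [sub_mulVec, smul_mulVec, one_mulVec]
    rw [hexp] at hmv
    have : B *ᵥ w = lamM • w - hC.eigenvalues i • w := by
      rw [← hmv]; abel
    rw [this, sub_smul]
  have := hbound _ ⟨w, hwne, hB_eig⟩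
  linarith

lemma dot_self_pos {x : V3} (hx : x ≠ 0) : 0 < x ⬝ᵥ x := by
  rcases (dot_self_nonneg x).lt_or_eq with h | h
  · exact h
  · exfalso; apply hx
    have h' : x 0 * x 0 + x 1 * x 1 + x 2 * x 2 = 0 := by
      have := h.symm
      simpa [dotProduct, Fin.sum_univ_three] using this
    have e0 : x 0 = 0 := by
      nlinarith [mul_self_nonneg (x 0), mul_self_nonneg (x 1), mul_self_nonneg (x 2)]
    have e1 : x 1 = 0 := by
      nlinarith [mul_self_nonneg (x 0), mul_self_nonneg (x 1), mul_self_nonneg (x 2)]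
    have e2 : x 2 = 0 := by
      nlinarith [mul_self_nonneg (x 0), mul_self_nonneg (x 1), mul_self_nonneg (x 2)]
    funext i
    fin_cases i <;> simpa using (by assumption : _ = (0:ℝ))

lemma quad_le_trace {A : M3} (hA : A.PosSemidef) (z : V3) :
    z ⬝ᵥ (A *ᵥ z) ≤ A.trace * (z ⬝ᵥ z) := by
  have h0 := hA.dotProduct_mulVec_nonneg ![0, -z 2, z 1]
  have h1 := hA.dotProduct_mulVec_nonneg ![z 2, 0, -z 0]
  have h2 := hA.dotProduct_mulVec_nonneg ![-z 1, z 0, 0]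
  simp only [star_trivial] at h0 h1 h2
  have key : A.trace * (z ⬝ᵥ z) - z ⬝ᵥ (A *ᵥ z)
      = (![0, -z 2, z 1] : V3) ⬝ᵥ (A *ᵥ ![0, -z 2, z 1])
      + (![z 2, 0, -z 0] : V3) ⬝ᵥ (A *ᵥ ![z 2, 0, -z 0])
      + (![-z 1, z 0, 0] : V3) ⬝ᵥ (A *ᵥ ![-z 1, z 0, 0]) := by
    simp only [dotProduct, mulVec, Fin.sum_univ_three, trace, diag_apply,
      Matrix.cons_val_zero, Matrix.cons_val_one, Matrix.cons_val_two, Matrix.tail_cons,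
      Matrix.head_cons]
    ring
  linarith

lemma psi_dir_bound {A : M3} (hA : A.PosDef) (hAs : Aᵀ = A) {T : M3} (hT : Tᵀ * T = 1)
    (lamM : ℝ) (hM : IsEigen (Abar A) lamM)
    (hbound : ∀ lam : ℝ, IsEigen (Abar A) lam → lam ≤ lamM)
    (e : V3) (he : e ⬝ᵥ e = 1) :
    psi (A * T) ⬝ᵥ e ≤ 2 * lamM := by
  have henorme : enorm3 e = 1 := by rw [enorm3, he, Real.sqrt_one]
  have hAbar_symm : (Abar A)ᵀ = Abar A := by
    rw [Abar, transpose_smul, transpose_sub, transpose_smul, transpose_one, hAs]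
  have hQ := shift_psd (herm_of_symm hAbar_symm) lamM hbound
  set lamin : ℝ := A.trace - 2 * lamM with hlamin
  have hPeq : A - lamin • (1 : M3) = (lamM • (1:M3) - Abar A) + (lamM • (1:M3) - Abar A) := by
    rw [Abar, hlamin]; module
  have hP : (A - lamin • (1 : M3)).PosSemidef := hPeq ▸ hQ.add hQ
  obtain ⟨w, hwne, hMw⟩ := hM
  have hAw : A *ᵥ w = lamin • w := by
    have h2 : (2⁻¹ : ℝ) • (A.trace • w - A *ᵥ w) = lamM • w := by
      rw [← hMw, Abar, smul_mulVec, sub_mulVec, smul_mulVec, one_mulVec]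
    have h3 : A.trace • w - A *ᵥ w = (2 * lamM) • w := by
      have := congrArg (fun v : V3 => (2:ℝ) • v) h2
      simpa [smul_smul] using this
    have : A *ᵥ w = A.trace • w - (2 * lamM) • w := by rw [← h3]; abel
    rw [this, hlamin, sub_smul]
  have hlamin_nonneg : 0 ≤ lamin := by
    have hq := hA.posSemidef.dotProduct_mulVec_nonneg w
    rw [star_trivial, hAw, dotProduct_smul, smul_eq_mul] at hq
    have hww := dot_self_pos hwne
    nlinarith [hq, hww]
  set K : M3 := skew e with hK
  set Hm : M3 := (4⁻¹ : ℝ) • (T * K - K * Tᵀ) with hHm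
  set G : M3 := 1 + Hm with hG
  have hGsym : Gᵀ = G := by
    rw [hG, hHm, hK, transpose_add, transpose_one, transpose_smul, transpose_sub,
      transpose_mul, transpose_mul, skew_transpose, transpose_transpose]
    congr 2
    simp only [neg_mul, mul_neg]
    abel
  have hGpsd : G.PosSemidef := by
    refine psd_of hGsym fun x => ?_
    have hmv : G *ᵥ x = x + (4⁻¹ : ℝ) • (T *ᵥ (K *ᵥ x) - K *ᵥ (Tᵀ *ᵥ x)) := by
      rw [hG, add_mulVec, one_mulVec, hHm, smul_mulVec, sub_mulVec,
        ← mulVec_mulVec, ← mulVec_mulVec]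
    have hd2 : x ⬝ᵥ (K *ᵥ (Tᵀ *ᵥ x)) = - (x ⬝ᵥ (T *ᵥ (K *ᵥ x))) := by
      rw [dotProduct_mulVec x K, ← mulVec_transpose, hK, skew_transpose, neg_mulVec,
        neg_dotProduct, dotProduct_mulVec _ Tᵀ, ← mulVec_transpose, transpose_transpose,
        dotProduct_comm]
    have hdge : -(x ⬝ᵥ x) ≤ x ⬝ᵥ (T *ᵥ (K *ᵥ x)) := by
      have h1 := cs3'' x (T *ᵥ (K *ᵥ x))
      have h2 : enorm3 (T *ᵥ (K *ᵥ x)) = enorm3 (K *ᵥ x) := enorm3_orth T hT _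
      have h3 : enorm3 (K *ᵥ x) ≤ enorm3 x := by
        have := skew_mulVec_enorm_le e x
        rw [henorme, one_mul] at this
        exact this
      have h4 : enorm3 x * enorm3 (T *ᵥ (K *ᵥ x)) ≤ enorm3 x * enorm3 x := by
        rw [h2]; exact mul_le_mul_of_nonneg_left h3 (enorm3_nonneg x)
      have h5 : enorm3 x * enorm3 x = x ⬝ᵥ x := by rw [← pow_two]; exact enorm3_sq x
      nlinarith [enorm3_nonneg x]
    rw [hmv, dotProduct_add, dotProduct_smul, dotProduct_sub, hd2, smul_eq_mul]
    linarith [dot_self_nonneg x]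
  have htrG : G.trace = 3 - psi T ⬝ᵥ e := by
    have ht1 : (K * Tᵀ)ᵀ = -(T * K) := by
      rw [transpose_mul, transpose_transpose, hK, skew_transpose, mul_neg]
    have h1 : (K * Tᵀ).trace = -(T * K).trace := by
      rw [← trace_transpose (K * Tᵀ), ht1, trace_neg]
    have h2 := psi_dot T e
    rw [hG, trace_add, trace_one3, hHm, trace_smul, trace_sub, h1, hK] at *
    rw [smul_eq_mul]
    linarith
  have hqe : psi T ⬝ᵥ e ≤ 2 := by
    have hcs := cs3' (psi T) e
    rw [henorme, mul_one] at hcs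
    have hpsi3 : psi T ⬝ᵥ psi T ≤ 3 := by
      have c0 : (Tᵀ * T) 0 0 = 1 := by rw [hT]; simp
      have c1 : (Tᵀ * T) 1 1 = 1 := by rw [hT]; simp
      have c2 : (Tᵀ * T) 2 2 = 1 := by rw [hT]; simp
      simp only [mul_apply, transpose_apply, Fin.sum_univ_three] at c0 c1 c2
      simp only [psi, dotProduct, Fin.sum_univ_three, Matrix.cons_val_zero,
        Matrix.cons_val_one, Matrix.cons_val_two, Matrix.tail_cons, Matrix.head_cons]
      nlinarith [sq_nonneg (T 0 0), sq_nonneg (T 1 1), sq_nonneg (T 2 2),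
        sq_nonneg (T 1 0 + T 0 1), sq_nonneg (T 2 0 + T 0 2), sq_nonneg (T 2 1 + T 1 2)]
    have h4 := enorm3_sq (psi T)
    nlinarith [enorm3_nonneg (psi T)]
  have hcore : psi (A * T) ⬝ᵥ e = A.trace - (A * G).trace := by
    have h1 := psi_dot (A * T) e
    have ht2 : (A * (K * Tᵀ))ᵀ = -(T * (K * A)) := by
      rw [transpose_mul, transpose_mul, transpose_transpose, hK, skew_transpose, hAs,
        mul_neg, neg_mul, mul_assoc]
    have h2 : (A * (K * Tᵀ)).trace = -((A * T) * K).trace := by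
      rw [← trace_transpose (A * (K * Tᵀ)), ht2, trace_neg, neg_inj, ← mul_assoc,
        trace_mul_cycle]
    have h3 : (A * G).trace
        = A.trace + (4⁻¹:ℝ) * ((A * (T * K)).trace - (A * (K * Tᵀ)).trace) := by
      rw [hG, mul_add, trace_add, mul_one, hHm, mul_smul_comm, trace_smul, mul_sub, trace_sub,
        smul_eq_mul]
    rw [h3, h2, ← mul_assoc, h1]
    ring
  have hPG := psd_trace_mul_nonneg hP hGpsd
  have hexp : ((A - lamin • (1:M3)) * G).trace = (A * G).trace - lamin * G.trace := by
    rw [sub_mul, trace_sub, smul_mul_assoc, one_mul, trace_smul, smul_eq_mul]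
  rw [hexp] at hPG
  have htrG1 : 1 ≤ G.trace := by rw [htrG]; linarith
  have hmul : lamin * 1 ≤ lamin * G.trace := mul_le_mul_of_nonneg_left htrG1 hlamin_nonneg
  rw [hcore]
  have hl : lamin = A.trace - 2 * lamM := hlamin
  linarith

lemma lamM_nonneg {A : M3} (hA : A.PosDef) (lamM : ℝ) (hM : IsEigen (Abar A) lamM) :
    0 ≤ lamM := by
  obtain ⟨w, hwne, hMw⟩ := hM
  have hq := quad_le_trace hA.posSemidef w
  have h1 : w ⬝ᵥ (Abar A *ᵥ w) = lamM * (w ⬝ᵥ w) := by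
    rw [hMw, dotProduct_smul, smul_eq_mul]
  have h2 : w ⬝ᵥ (Abar A *ᵥ w) = 2⁻¹ * (A.trace * (w ⬝ᵥ w) - w ⬝ᵥ (A *ᵥ w)) := by
    rw [Abar, smul_mulVec, sub_mulVec, smul_mulVec, one_mulVec,
      dotProduct_smul, dotProduct_sub, dotProduct_smul]
    simp only [smul_eq_mul]
  nlinarith [dot_self_pos hwne]

lemma psi_bound {A : M3} (hA : A.PosDef) (hAs : Aᵀ = A) {T : M3} (hT : Tᵀ * T = 1)
    (lamM : ℝ) (hM : IsEigen (Abar A) lamM)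
    (hbound : ∀ lam : ℝ, IsEigen (Abar A) lam → lam ≤ lamM) :
    enorm3 (psi (A * T)) ≤ 2 * lamM := by
  by_cases hz : psi (A * T) = 0
  · rw [hz]
    have h0 : enorm3 (0 : V3) = 0 := by simp [enorm3, dotProduct]
    rw [h0]
    linarith [lamM_nonneg hA lamM hM]
  · set p := psi (A * T) with hp
    have hpp := dot_self_pos hz
    have hsp : 0 < enorm3 p := Real.sqrt_pos.mpr hpp
    set e : V3 := (enorm3 p)⁻¹ • p with hedef
    have hself : p ⬝ᵥ p = enorm3 p * enorm3 p := (Real.mul_self_sqrt (dot_self_nonneg p)).symm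
    have he : e ⬝ᵥ e = 1 := by
      rw [hedef, smul_dotProduct, dotProduct_smul, smul_eq_mul, smul_eq_mul, hself]
      field_simp
    have hpe : p ⬝ᵥ e = enorm3 p := by
      rw [hedef, dotProduct_smul, smul_eq_mul, hself]
      field_simp
    have := psi_dir_bound hA hAs hT lamM hM hbound e he
    rw [← hp, hpe] at this
    exact this


theorem D_terms_bound
    (A : M3) (hA : A.PosDef) (u : V3) (hu : u ⬝ᵥ u = 1)
    (lamM : ℝ) (hM : IsEigen (Abar A) lamM)
    (hbound : ∀ lam : ℝ, IsEigen (Abar A) lam → lam ≤ lamM) :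
    ∀ R ∈ SO3, ∀ θ : ℝ, ∀ ω : V3, ∀ v : ℝ,
      enorm3 (DR A u R θ *ᵥ ω + v • Dθ A u R θ) ≤
        fnorm (Abar A) * enorm3 ω + (fnorm (Abar A) + 2 * lamM) * |v| := by
  intro R hR θ ω v
  have hAs : Aᵀ = A := by
    have h := hA.isHermitian
    rwa [Matrix.IsHermitian, conjTranspose_eq_transpose_of_trivial] at h
  have hRt : (Ra θ u)ᵀ * Ra θ u = 1 := Ra_orth θ u hu
  have hT : (Tmap u R θ)ᵀ * Tmap u R θ = 1 := by
    rw [Tmap, transpose_mul, mul_assoc, ← mul_assoc Rᵀ, hR.1, one_mul, hRt]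
  have hRtT : ((Ra θ u)ᵀ)ᵀ * (Ra θ u)ᵀ = 1 := by
    rw [transpose_transpose]; exact mul_eq_one_comm.mp hRt
  have hu1 : enorm3 u = 1 := by rw [enorm3, hu, Real.sqrt_one]
  set E := Emap (A * Tmap u R θ) with hE
  have hfE : fnorm E ≤ fnorm (Abar A) := fnorm_Emap_le _ hA.posSemidef hAs hT
  have hDR : enorm3 (DR A u R θ *ᵥ ω) ≤ fnorm (Abar A) * enorm3 ω := by
    have h1 : DR A u R θ *ᵥ ω = Ra θ u *ᵥ (E *ᵥ ((Ra θ u)ᵀ *ᵥ ω)) := by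
      rw [DR, ← hE, ← mulVec_mulVec, ← mulVec_mulVec]
    rw [h1, enorm3_orth _ hRt]
    calc enorm3 (E *ᵥ ((Ra θ u)ᵀ *ᵥ ω)) ≤ fnorm E * enorm3 ((Ra θ u)ᵀ *ᵥ ω) :=
          mulVec_enorm3_le _ _
      _ = fnorm E * enorm3 ω := by rw [enorm3_orth _ hRtT]
      _ ≤ fnorm (Abar A) * enorm3 ω := mul_le_mul_of_nonneg_right hfE (enorm3_nonneg ω)
  have hDθ : enorm3 (Dθ A u R θ) ≤ fnorm (Abar A) + 2 * lamM := by
    have h1 : enorm3 ((Ra θ u * E) *ᵥ u) ≤ fnorm (Abar A) := by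
      rw [← mulVec_mulVec, enorm3_orth _ hRt]
      calc enorm3 (E *ᵥ u) ≤ fnorm E * enorm3 u := mulVec_enorm3_le _ _
        _ = fnorm E := by rw [hu1, mul_one]
        _ ≤ fnorm (Abar A) := hfE
    have h2 : enorm3 (skew (Ra θ u *ᵥ psi (A * Tmap u R θ)) *ᵥ u) ≤ 2 * lamM := by
      calc enorm3 (skew (Ra θ u *ᵥ psi (A * Tmap u R θ)) *ᵥ u)
          ≤ enorm3 (Ra θ u *ᵥ psi (A * Tmap u R θ)) * enorm3 u := skew_mulVec_enorm_le _ _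
        _ = enorm3 (psi (A * Tmap u R θ)) := by rw [hu1, mul_one, enorm3_orth _ hRt]
        _ ≤ 2 * lamM := psi_bound hA hAs hT lamM hM hbound
    calc enorm3 (Dθ A u R θ)
        ≤ enorm3 ((Ra θ u * E) *ᵥ u)
          + enorm3 (skew (Ra θ u *ᵥ psi (A * Tmap u R θ)) *ᵥ u) := by
          rw [Dθ, ← hE]; exact enorm3_sub _ _
      _ ≤ fnorm (Abar A) + 2 * lamM := add_le_add h1 h2
  calc enorm3 (DR A u R θ *ᵥ ω + v • Dθ A u R θ)
      ≤ enorm3 (DR A u R θ *ᵥ ω) + enorm3 (v • Dθ A u R θ) := enorm3_add _ _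
    _ = enorm3 (DR A u R θ *ᵥ ω) + |v| * enorm3 (Dθ A u R θ) := by rw [enorm3_smul]
    _ ≤ fnorm (Abar A) * enorm3 ω + |v| * (fnorm (Abar A) + 2 * lamM) :=
        add_le_add hDR (mul_le_mul_of_nonneg_left hDθ (abs_nonneg v))
    _ = fnorm (Abar A) * enorm3 ω + (fnorm (Abar A) + 2 * lamM) * |v| := by ring
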